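/- Characterization of the posterior mode: fix an integer K ≥ 2, parameters β ∈ (0,1], γ > 0, η > 0, ν ∈ ℝ^K, and s ∈ ℝ^K with all entries positive, and let L be the log-posterior L(α) := log Γ(K(1−β) + β·∑_i α_i) − ∑_i log Γ(β·α_i + (1−β)) + β·∑_i α_i·log s_i + γ·η·[log Γ(∑_i α_i) − ∑_i log Γ(α_i)] − γ·∑_i α_i·ν_i. A point α ∈ ℝ^K with all entries positive maximizes L over the positive orthant if and only if for every j ∈ {1,…,K}: β·Ψ(K(1−β) + β·∑_i α_i) − β·Ψ(β·α_j + (1−β)) + β·log s_j + γ·η·[Ψ(∑_i α_i) − Ψ(α_j)] − γ·ν_j = 0, where Ψ is the digamma function. -/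

import Mathlib

open Real MeasureTheory Set

/-- The digamma function: derivative of `log ∘ Γ`. -/
noncomputable def digamma : ℝ → ℝ := deriv (fun x : ℝ => Real.log (Real.Gamma x))


noncomputable def Breal (s t : ℝ) : ℝ := ∫ x in (0:ℝ)..1, x ^ (s-1) * (1-x) ^ (t-1)

lemma betaIntegral_ofReal (s t : ℝ) :
    Complex.betaIntegral s t = (Breal s t : ℂ) := by
  rw [Complex.betaIntegral, Breal, ← intervalIntegral.integral_ofReal]
  refine intervalIntegral.integral_congr fun x hx => ?_
  rw [Set.uIcc_of_le (by norm_num : (0:ℝ) ≤ 1)] at hx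
  have e1 : ((s:ℂ) - 1) = ((s - 1 : ℝ) : ℂ) := by push_cast; ring
  have e2 : ((t:ℂ) - 1) = ((t - 1 : ℝ) : ℂ) := by push_cast; ring
  have e3 : (1 - (x:ℂ)) = ((1 - x : ℝ) : ℂ) := by push_cast; ring
  rw [e1, e2, e3, ← Complex.ofReal_cpow hx.1, ← Complex.ofReal_cpow (by linarith [hx.2] : (0:ℝ) ≤ 1 - x), ← Complex.ofReal_mul]

lemma Gamma_mul_Gamma_eq (s t : ℝ) (hs : 0 < s) (ht : 0 < t) :
    Real.Gamma s * Real.Gamma t = Real.Gamma (s+t) * Breal s t := by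
  have := Complex.Gamma_mul_Gamma_eq_betaIntegral (s := s) (t := t) (by simpa) (by simpa)
  rw [betaIntegral_ofReal] at this
  rw [← Complex.ofReal_inj]
  push_cast [← Complex.Gamma_ofReal]
  simpa using this

lemma Breal_pos {s t : ℝ} (hs : 0 < s) (ht : 0 < t) : 0 < Breal s t := by
  have h := Gamma_mul_Gamma_eq s t hs ht
  have h1 := Real.Gamma_pos_of_pos hs
  have h2 := Real.Gamma_pos_of_pos ht
  have h3 := Real.Gamma_pos_of_pos (by linarith : 0 < s + t)
  nlinarith [mul_pos h1 h2]


lemma integrableOn_beta {s t : ℝ} (hs : 0 < s) (ht : 0 < t) :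
    IntegrableOn (fun x : ℝ => x ^ (s-1) * (1-x) ^ (t-1)) (Ioo 0 1) := by
  have h := Complex.betaIntegral_convergent (u := (s:ℂ)) (v := (t:ℂ)) (by simpa) (by simpa)
  rw [intervalIntegrable_iff_integrableOn_Ioc_of_le (by norm_num)] at h
  have h2 : IntegrableOn (fun x:ℝ => ((x:ℂ) ^ ((s:ℂ)-1) * (1-(x:ℂ)) ^ ((t:ℂ)-1))) (Ioo 0 1) :=
    h.mono_set Ioo_subset_Ioc_self
  have h3 := h2.re
  refine (integrable_congr ?_).mpr h3
  refine (ae_restrict_iff' measurableSet_Ioo).mpr (ae_of_all _ fun x hx => ?_)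
  have e1 : ((s:ℂ) - 1) = ((s - 1 : ℝ) : ℂ) := by push_cast; ring
  have e2 : ((t:ℂ) - 1) = ((t - 1 : ℝ) : ℂ) := by push_cast; ring
  have e3 : (1 - (x:ℂ)) = ((1 - x : ℝ) : ℂ) := by push_cast; ring
  simp only [e1, e2, e3, ← Complex.ofReal_cpow hx.1.le,
    ← Complex.ofReal_cpow (by linarith [hx.2] : (0:ℝ) ≤ 1 - x), ← Complex.ofReal_mul]
  simp

lemma Breal_eq_setIntegral (s t : ℝ) :
    Breal s t = ∫ x in Ioo (0:ℝ) 1, x ^ (s-1) * (1-x) ^ (t-1) := by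
  rw [Breal, intervalIntegral.integral_of_le (by norm_num : (0:ℝ) ≤ 1),
    MeasureTheory.integral_Ioc_eq_integral_Ioo]

lemma Breal_interpolate {s t s' t' a b : ℝ} (hs : 0 < s) (ht : 0 < t) (hs' : 0 < s')
    (ht' : 0 < t') (ha : 0 < a) (hb : 0 < b) (hab : a + b = 1) :
    Breal (a*s+b*s') (a*t+b*t') ≤ Breal s t ^ a * Breal s' t' ^ b := by
  let f : ℝ → ℝ → ℝ → ℝ → ℝ := fun c u v x => x ^ (c*(u-1)) * (1-x) ^ (c*(v-1))
  have e : Real.HolderConjugate (1 / a) (1 / b) := Real.holderConjugate_one_div ha hb hab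
  have posf : ∀ c u v x : ℝ, x ∈ Ioo (0:ℝ) 1 → 0 ≤ f c u v x := fun c u v x hx =>
    mul_nonneg (rpow_nonneg hx.1.le _) (rpow_nonneg (by linarith [hx.2]) _)
  have posf' : ∀ c u v : ℝ, 0 ≤ᶠ[ae (volume.restrict (Ioo 0 1))] f c u v := fun c u v =>
    (ae_restrict_iff' measurableSet_Ioo).mpr (ae_of_all _ (posf c u v))
  have fpow : ∀ {c x : ℝ}, 0 < c → ∀ (u v : ℝ), x ∈ Ioo (0:ℝ) 1 →
      x ^ (u-1) * (1-x) ^ (v-1) = f c u v x ^ (1 / c) := by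
    intro c x hc u v hx
    dsimp only [f]
    rw [mul_rpow (rpow_nonneg hx.1.le _) (rpow_nonneg (by linarith [hx.2] : (0:ℝ) ≤ 1-x) _),
      ← rpow_mul hx.1.le, ← rpow_mul (by linarith [hx.2] : (0:ℝ) ≤ 1-x)]
    congr 2 <;> field_simp
  have f_meas : ∀ c u v : ℝ, AEStronglyMeasurable (f c u v) (volume.restrict (Ioo 0 1)) := by
    intro c u v
    refine ContinuousOn.aestronglyMeasurable ?_ measurableSet_Ioo
    refine ContinuousOn.mul ?_ ?_
    · exact continuousOn_of_forall_continuousAt fun x hx =>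
        (continuousAt_rpow_const _ _ (Or.inl hx.1.ne')).comp continuousAt_id
    · refine continuousOn_of_forall_continuousAt fun x hx => ?_
      exact (continuousAt_rpow_const _ _ (Or.inl (by simp; linarith [hx.2]))).comp
        (continuous_const.sub continuous_id).continuousAt
  have f_mem_Lp : ∀ {c u v : ℝ}, 0 < c → 0 < u → 0 < v →
      MemLp (f c u v) (ENNReal.ofReal (1 / c)) (volume.restrict (Ioo 0 1)) := by
    intro c u v hc hu hv
    have A : ENNReal.ofReal (1 / c) ≠ 0 := by
      rwa [Ne, ENNReal.ofReal_eq_zero, not_le, one_div_pos]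
    have B : ENNReal.ofReal (1 / c) ≠ ⊤ := ENNReal.ofReal_ne_top
    rw [← memLp_norm_rpow_iff _ A B, ENNReal.toReal_ofReal (one_div_nonneg.mpr hc.le),
      ENNReal.div_self A B, memLp_one_iff_integrable]
    · apply Integrable.congr (integrableOn_beta hu hv)
      refine Filter.eventuallyEq_of_mem (self_mem_ae_restrict measurableSet_Ioo) fun x hx => ?_
      rw [fpow hc u v hx]
      congr 1
      exact (norm_of_nonneg (posf _ _ _ x hx)).symm
    · exact f_meas c u v
  have hst : Breal (a*s+b*s') (a*t+b*t') = ∫ x in Ioo (0:ℝ) 1, f a s t x * f b s' t' x := by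
    rw [Breal_eq_setIntegral]
    refine setIntegral_congr_fun measurableSet_Ioo fun x hx => ?_
    dsimp only [f]
    rw [show x ^ (a*(s-1)) * (1-x) ^ (a*(t-1)) * (x ^ (b*(s'-1)) * (1-x) ^ (b*(t'-1)))
        = (x ^ (a*(s-1)) * x ^ (b*(s'-1))) * ((1-x) ^ (a*(t-1)) * (1-x) ^ (b*(t'-1))) by ring,
      ← Real.rpow_add hx.1, ← Real.rpow_add (by linarith [hx.2] : (0:ℝ) < 1-x)]
    congr 2 <;> linarith [hab]
  rw [hst]
  convert MeasureTheory.integral_mul_le_Lp_mul_Lq_of_nonneg e (posf' a s t) (posf' b s' t')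
      (f_mem_Lp ha hs ht) (f_mem_Lp hb hs' ht') using 1
  rw [one_div_one_div, one_div_one_div]
  congr 2 <;> [skip; skip] <;> rw [Breal_eq_setIntegral] <;>
    exact setIntegral_congr_fun measurableSet_Ioo fun x hx => fpow (by assumption) _ _ hx

lemma log_Breal {s t : ℝ} (hs : 0 < s) (ht : 0 < t) :
    Real.log (Breal s t)
      = Real.log (Real.Gamma s) + Real.log (Real.Gamma t) - Real.log (Real.Gamma (s+t)) := by
  have h := Gamma_mul_Gamma_eq s t hs ht
  have h3 := Real.Gamma_pos_of_pos (by linarith : 0 < s + t)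
  have hB : Breal s t = Real.Gamma s * Real.Gamma t / Real.Gamma (s+t) := by
    field_simp; linarith [h]
  rw [hB, Real.log_div (by positivity) h3.ne',
    Real.log_mul (Real.Gamma_pos_of_pos hs).ne' (Real.Gamma_pos_of_pos ht).ne']

lemma convexOn_logBeta :
    ConvexOn ℝ ((Ioi (0:ℝ)) ×ˢ (Ioi (0:ℝ)))
      (fun p : ℝ × ℝ => Real.log (Real.Gamma p.1) + Real.log (Real.Gamma p.2)
        - Real.log (Real.Gamma (p.1 + p.2))) := by
  refine convexOn_iff_forall_pos.mpr ⟨(convex_Ioi _).prod (convex_Ioi _), ?_⟩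
  rintro ⟨s, t⟩ ⟨hs, ht⟩ ⟨s', t'⟩ ⟨hs', ht'⟩ a b ha hb hab
  simp only [mem_Ioi] at hs ht hs' ht'
  have h1 : (0:ℝ) < a*s+b*s' := by positivity
  have h2 : (0:ℝ) < a*t+b*t' := by positivity
  rw [← log_Breal hs ht, ← log_Breal hs' ht']
  have : (a • (s,t) + b • (s',t') : ℝ × ℝ) = (a*s+b*s', a*t+b*t') := by
    simp [Prod.ext_iff]
  rw [this]
  simp only [smul_eq_mul]
  rw [← log_Breal h1 h2, ← Real.log_rpow (Breal_pos hs ht),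
    ← Real.log_rpow (Breal_pos hs' ht'), ← Real.log_mul (Real.rpow_pos_of_pos (Breal_pos hs ht) a).ne' (Real.rpow_pos_of_pos (Breal_pos hs' ht') b).ne']
  exact Real.log_le_log (Breal_pos h1 h2)
    (Breal_interpolate hs ht hs' ht' ha hb hab)

/-- positive orthant -/
def orth (K : ℕ) : Set (Fin K → ℝ) := {x | ∀ i, 0 < x i}

lemma convex_orth (K : ℕ) : Convex ℝ (orth K) := by
  have : orth K = Set.pi Set.univ (fun _ : Fin K => Ioi (0:ℝ)) := by
    ext x; simp [orth, Set.mem_pi]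
  rw [this]
  exact convex_pi fun i _ => convex_Ioi 0

lemma convexOn_A : ∀ K : ℕ, 1 ≤ K → ConvexOn ℝ (orth K)
    (fun x : Fin K → ℝ => (∑ i, Real.log (Real.Gamma (x i)))
      - Real.log (Real.Gamma (∑ i, x i))) := by
  intro K
  induction K with
  | zero => omega
  | succ K ih =>
    intro _
    rcases Nat.eq_or_lt_of_le (Nat.one_le_iff_ne_zero.mpr (Nat.succ_ne_zero K)) with hK1 | hK1
    · -- K+1 = 1
      have hK0 : K = 0 := by omega
      subst hK0
      refine ⟨convex_orth 1, fun x hx y hy a b ha hb hab => ?_⟩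
      simp [Fin.sum_univ_one]
    · have hK : 1 ≤ K := by omega
      -- A_{K+1} x = A_K (front x) + F(∑ front, last) where front = x ∘ castSucc
      have key : ∀ x : Fin (K+1) → ℝ,
          (∑ i, Real.log (Real.Gamma (x i))) - Real.log (Real.Gamma (∑ i, x i))
          = ((∑ i : Fin K, Real.log (Real.Gamma (x i.castSucc)))
              - Real.log (Real.Gamma (∑ i : Fin K, x i.castSucc)))
            + (Real.log (Real.Gamma (∑ i : Fin K, x i.castSucc))
                + Real.log (Real.Gamma (x (Fin.last K)))
                - Real.log (Real.Gamma ((∑ i : Fin K, x i.castSucc) + x (Fin.last K)))) := by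
        intro x
        rw [Fin.sum_univ_castSucc (f := x), Fin.sum_univ_castSucc (f := fun i => Real.log (Real.Gamma (x i)))]
        ring
      have hA := ih hK
      -- linear maps
      let T1 : (Fin (K+1) → ℝ) →ₗ[ℝ] (Fin K → ℝ) :=
        { toFun := fun x i => x i.castSucc
          map_add' := fun x y => rfl
          map_smul' := fun c x => rfl }
      let T2 : (Fin (K+1) → ℝ) →ₗ[ℝ] ℝ × ℝ :=
        { toFun := fun x => (∑ i : Fin K, x i.castSucc, x (Fin.last K))
          map_add' := fun x y => by simp [Finset.sum_add_distrib, Prod.ext_iff]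
          map_smul' := fun c x => by simp [Finset.mul_sum, Prod.ext_iff] }
      have h1 := hA.comp_affineMap T1.toAffineMap
      have h2 := convexOn_logBeta.comp_affineMap T2.toAffineMap
      have sub1 : orth (K+1) ⊆ ⇑T1.toAffineMap ⁻¹' orth K := by
        intro x hx i; exact hx i.castSucc
      have sub2 : orth (K+1) ⊆ ⇑T2.toAffineMap ⁻¹' (Ioi (0:ℝ) ×ˢ Ioi (0:ℝ)) := by
        intro x hx
        refine ⟨?_, hx (Fin.last K)⟩
        exact Finset.sum_pos (fun i _ => hx i.castSucc)
          (Finset.univ_nonempty_iff.mpr (Fin.pos_iff_nonempty.mp (by omega)))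
      have hsum := (h1.subset sub1 (convex_orth (K+1))).add (h2.subset sub2 (convex_orth (K+1)))
      refine ⟨convex_orth (K+1), fun x hx y hy a b ha hb hab => ?_⟩
      have h := hsum.2 hx hy ha hb hab
      simp only [Pi.add_apply, Function.comp_apply, LinearMap.coe_toAffineMap] at h
      dsimp only [T1, T2, LinearMap.coe_mk, AddHom.coe_mk] at h
      dsimp only
      rw [key x, key y, key (a • x + b • y)]
      exact h

lemma hasDerivAt_logGamma {x : ℝ} (hx : 0 < x) :
    HasDerivAt (fun y : ℝ => Real.log (Real.Gamma y)) (digamma x) x := by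
  have hne : ∀ m : ℕ, x ≠ -m := fun m => by
    intro h; rw [h] at hx; have : (0:ℝ) ≤ m := Nat.cast_nonneg m; linarith
  have hdiff : DifferentiableAt ℝ (fun y : ℝ => Real.log (Real.Gamma y)) x :=
    (Real.differentiableAt_Gamma hne).log (Real.Gamma_pos_of_pos hx).ne'
  simpa [digamma] using hdiff.hasDerivAt

lemma hasDerivAt_logGamma_affine {A B t₀ : ℝ} (h : 0 < A + B * t₀) :
    HasDerivAt (fun t : ℝ => Real.log (Real.Gamma (A + B * t)))
      (B * digamma (A + B * t₀)) t₀ := by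
  have inner : HasDerivAt (fun t : ℝ => A + B * t) B t₀ := by
    simpa using ((hasDerivAt_id t₀).const_mul B).const_add A
  simpa [mul_comm, Function.comp_def] using (hasDerivAt_logGamma h).comp t₀ inner

lemma hasDerivAt_affine (C D : ℝ) : HasDerivAt (fun t : ℝ => C + D * t) D 0 := by
  simpa using ((hasDerivAt_id (0:ℝ)).const_mul D).const_add C

lemma hasDerivAt_L_line (K : ℕ) (hK : 2 ≤ K) (β γ η : ℝ)
    (hβ : 0 < β) (hβ1 : β ≤ 1)
    (ν s : Fin K → ℝ)
    (L : (Fin K → ℝ) → ℝ)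
    (hL : ∀ α, L α =
      Real.log (Real.Gamma ((K : ℝ) * (1 - β) + β * ∑ i, α i))
        - ∑ i, Real.log (Real.Gamma (β * α i + (1 - β)))
        + β * ∑ i, α i * Real.log (s i)
        + γ * η * (Real.log (Real.Gamma (∑ i, α i))
            - ∑ i, Real.log (Real.Gamma (α i)))
        - γ * ∑ i, α i * ν i)
    (α v : Fin K → ℝ) (hα : ∀ i, 0 < α i) :
    HasDerivAt (fun t : ℝ => L (α + t • v))
      (β * (∑ i, v i) * digamma ((K : ℝ) * (1 - β) + β * ∑ i, α i)
        - ∑ i, β * v i * digamma (β * α i + (1 - β))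
        + β * ∑ i, v i * Real.log (s i)
        + γ * η * ((∑ i, v i) * digamma (∑ i, α i) - ∑ i, v i * digamma (α i))
        - γ * ∑ i, v i * ν i) 0 := by
  have hS : 0 < ∑ i, α i :=
    Finset.sum_pos (fun i _ => hα i) (Finset.univ_nonempty_iff.mpr (Fin.pos_iff_nonempty.mp (by omega)))
  set S := ∑ i, α i with hSdef
  set V := ∑ i, v i with hVdef
  have hfun : (fun t : ℝ => L (α + t • v)) = fun t =>
      Real.log (Real.Gamma (((K:ℝ)*(1-β) + β*S) + (β*V)*t))
        - ∑ i, Real.log (Real.Gamma ((β * α i + (1-β)) + (β * v i) * t))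
        + ((β * ∑ i, α i * Real.log (s i)) + (β * ∑ i, v i * Real.log (s i)) * t)
        + γ * η * (Real.log (Real.Gamma (S + V * t))
            - ∑ i, Real.log (Real.Gamma (α i + v i * t)))
        - ((γ * ∑ i, α i * ν i) + (γ * ∑ i, v i * ν i) * t) := by
    funext t
    rw [hL]
    simp only [Pi.add_apply, Pi.smul_apply, smul_eq_mul, hSdef, hVdef]
    have hsum : (∑ i, (α i + t * v i)) = (∑ i, α i) + (∑ i, v i) * t := by
      rw [Finset.sum_add_distrib, ← Finset.mul_sum]; ring
    rw [hsum]
    have ea : (K:ℝ) * (1-β) + β * ((∑ i, α i) + (∑ i, v i) * t)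
        = ((K:ℝ)*(1-β) + β*(∑ i, α i)) + (β*(∑ i, v i))*t := by ring
    rw [ea]
    have e1 : ∑ i, (α i + t * v i) * Real.log (s i)
        = (∑ i, α i * Real.log (s i)) + t * ∑ i, v i * Real.log (s i) := by
      rw [Finset.mul_sum, ← Finset.sum_add_distrib]
      exact Finset.sum_congr rfl fun i _ => by ring
    have e2 : ∑ i, (α i + t * v i) * ν i
        = (∑ i, α i * ν i) + t * ∑ i, v i * ν i := by
      rw [Finset.mul_sum, ← Finset.sum_add_distrib]
      exact Finset.sum_congr rfl fun i _ => by ring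
    rw [e1, e2]
    have e3 : ∀ i : Fin K, β * (α i + t * v i) + (1 - β) = (β * α i + (1-β)) + (β * v i) * t := by
      intro i; ring
    simp only [e3]
    have e4 : ∀ i : Fin K, α i + t * v i = α i + v i * t := fun i => by ring
    simp only [e4]
    ring
  rw [hfun]
  have h1 : HasDerivAt (fun t : ℝ => Real.log (Real.Gamma (((K:ℝ)*(1-β) + β*S) + (β*V)*t)))
      ((β*V) * digamma (((K:ℝ)*(1-β) + β*S) + (β*V)*0)) 0 := by
    apply hasDerivAt_logGamma_affine
    have : (0:ℝ) ≤ (K:ℝ)*(1-β) := by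
      apply mul_nonneg (Nat.cast_nonneg K); linarith
    nlinarith [mul_pos hβ hS]
  have h2 : HasDerivAt (fun t : ℝ => ∑ i, Real.log (Real.Gamma ((β * α i + (1-β)) + (β * v i) * t)))
      (∑ i, (β * v i) * digamma ((β * α i + (1-β)) + (β * v i)*0)) 0 := by
    apply HasDerivAt.fun_sum
    intro i _
    apply hasDerivAt_logGamma_affine
    have := hα i
    nlinarith [mul_pos hβ (hα i)]
  have h4a : HasDerivAt (fun t : ℝ => Real.log (Real.Gamma (S + V * t)))
      (V * digamma (S + V * 0)) 0 := hasDerivAt_logGamma_affine (by simpa using hS)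
  have h4b : HasDerivAt (fun t : ℝ => ∑ i, Real.log (Real.Gamma (α i + v i * t)))
      (∑ i, v i * digamma (α i + v i * 0)) 0 :=
    HasDerivAt.fun_sum fun i _ => hasDerivAt_logGamma_affine (by simpa using hα i)
  have h3 := hasDerivAt_affine (β * ∑ i, α i * Real.log (s i)) (β * ∑ i, v i * Real.log (s i))
  have h5 := hasDerivAt_affine (γ * ∑ i, α i * ν i) (γ * ∑ i, v i * ν i)
  have := (((h1.sub h2).add h3).add ((h4a.sub h4b).const_mul (γ * η))).sub h5
  simp only [mul_zero, add_zero] at this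
  exact this

lemma concaveOn_L (K : ℕ) (hK : 2 ≤ K) (β γ η : ℝ)
    (hβ : 0 < β) (hβ1 : β ≤ 1) (hγ : 0 < γ) (hη : 0 < η)
    (ν s : Fin K → ℝ)
    (L : (Fin K → ℝ) → ℝ)
    (hL : ∀ α, L α =
      Real.log (Real.Gamma ((K : ℝ) * (1 - β) + β * ∑ i, α i))
        - ∑ i, Real.log (Real.Gamma (β * α i + (1 - β)))
        + β * ∑ i, α i * Real.log (s i)
        + γ * η * (Real.log (Real.Gamma (∑ i, α i))
            - ∑ i, Real.log (Real.Gamma (α i)))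
        - γ * ∑ i, α i * ν i) :
    ConcaveOn ℝ (orth K) L := by
  have hK1 : 1 ≤ K := by omega
  have hA := convexOn_A K hK1
  -- affine map α ↦ (fun i => β * α i + (1 - β))
  let T : (Fin K → ℝ) →ₗ[ℝ] (Fin K → ℝ) :=
    { toFun := fun x i => β * x i
      map_add' := fun x y => by funext i; simp [mul_add]
      map_smul' := fun c x => by funext i; simp [smul_eq_mul]; ring }
  let g : (Fin K → ℝ) →ᵃ[ℝ] (Fin K → ℝ) :=
    T.toAffineMap + AffineMap.const ℝ (Fin K → ℝ) (fun _ => 1 - β)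
  have hg : ∀ x : Fin K → ℝ, g x = fun i => β * x i + (1 - β) := fun x => rfl
  have sub1 : orth K ⊆ ⇑g ⁻¹' orth K := by
    intro x hx
    have : ∀ i, 0 < (fun i => β * x i + (1 - β)) i := by
      intro i; dsimp only; nlinarith [mul_pos hβ (hx i), hx i]
    show ∀ i, 0 < g x i
    rw [hg]; exact this
  have f1c : ConcaveOn ℝ (orth K)
      (fun α : Fin K → ℝ => -(((∑ i, Real.log (Real.Gamma (β * α i + (1-β))))
        - Real.log (Real.Gamma (∑ i, (β * α i + (1-β))))))) := by
    have := ((hA.comp_affineMap g).subset sub1 (convex_orth K)).neg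
    refine ConcaveOn.congr this ?_
    intro x hx
    simp [Function.comp, hg]
  have f2c : ConcaveOn ℝ (orth K)
      (fun α : Fin K → ℝ => (γ * η) • (-((∑ i, Real.log (Real.Gamma (α i)))
        - Real.log (Real.Gamma (∑ i, α i))))) :=
    ConcaveOn.smul (by positivity) hA.neg
  have f3c : ConcaveOn ℝ (orth K)
      (fun α : Fin K → ℝ => β * ∑ i, α i * Real.log (s i) - γ * ∑ i, α i * ν i) := by
    refine ⟨convex_orth K, fun x hx y hy a b ha hb hab => le_of_eq ?_⟩
    have lin : ∀ c : Fin K → ℝ, ∑ i, (a • x + b • y) i * c i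
        = a * (∑ i, x i * c i) + b * (∑ i, y i * c i) := by
      intro c
      rw [Finset.mul_sum, Finset.mul_sum, ← Finset.sum_add_distrib]
      exact Finset.sum_congr rfl fun i _ => by
        simp [Pi.add_apply, Pi.smul_apply, smul_eq_mul]; ring
    simp only [smul_eq_mul, lin]
    ring
  have hsum := (f1c.add f2c).add f3c
  refine ConcaveOn.congr hsum ?_
  intro x hx
  rw [hL]
  have hconst : ∑ i : Fin K, (β * x i + (1-β)) = β * (∑ i, x i) + (K:ℝ) * (1-β) := by
    rw [Finset.sum_add_distrib, ← Finset.mul_sum, Finset.sum_const, Finset.card_univ,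
      Fintype.card_fin, nsmul_eq_mul]
  simp only [Pi.add_apply, hconst, smul_eq_mul]
  ring_nf

/-- Characterization of the posterior mode: a point `α` with positive entries
maximizes the log-posterior `L` over the positive orthant if and only if the
stationarity equations (11) of the paper hold at `α`. -/
theorem posterior_mode_characterization (K : ℕ) (hK : 2 ≤ K) (β γ η : ℝ)
    (hβ : 0 < β) (hβ1 : β ≤ 1) (hγ : 0 < γ) (hη : 0 < η)
    (ν s : Fin K → ℝ) (hs : ∀ i, 0 < s i)
    (L : (Fin K → ℝ) → ℝ)
    (hL : ∀ α, L α =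
      Real.log (Real.Gamma ((K : ℝ) * (1 - β) + β * ∑ i, α i))
        - ∑ i, Real.log (Real.Gamma (β * α i + (1 - β)))
        + β * ∑ i, α i * Real.log (s i)
        + γ * η * (Real.log (Real.Gamma (∑ i, α i))
            - ∑ i, Real.log (Real.Gamma (α i)))
        - γ * ∑ i, α i * ν i)
    (α : Fin K → ℝ) (hα : ∀ i, 0 < α i) :
    (∀ α' : Fin K → ℝ, (∀ i, 0 < α' i) → L α' ≤ L α) ↔
      (∀ j : Fin K,
        β * digamma ((K : ℝ) * (1 - β) + β * ∑ i, α i)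
          - β * digamma (β * α j + (1 - β)) + β * Real.log (s j)
          + γ * η * (digamma (∑ i, α i) - digamma (α j)) - γ * ν j = 0) := by
  have hS : 0 < ∑ i, α i :=
    Finset.sum_pos (fun i _ => hα i)
      (Finset.univ_nonempty_iff.mpr (Fin.pos_iff_nonempty.mp (by omega)))
  set E : Fin K → ℝ := fun j =>
    β * digamma ((K : ℝ) * (1 - β) + β * ∑ i, α i)
      - β * digamma (β * α j + (1 - β)) + β * Real.log (s j)
      + γ * η * (digamma (∑ i, α i) - digamma (α j)) - γ * ν j with hE
  have key : ∀ v : Fin K → ℝ,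
      (β * (∑ i, v i) * digamma ((K : ℝ) * (1 - β) + β * ∑ i, α i)
        - ∑ i, β * v i * digamma (β * α i + (1 - β))
        + β * ∑ i, v i * Real.log (s i)
        + γ * η * ((∑ i, v i) * digamma (∑ i, α i) - ∑ i, v i * digamma (α i))
        - γ * ∑ i, v i * ν i) = ∑ j, v j * E j := by
    intro v
    have e : ∀ j : Fin K, v j * E j =
        β * digamma ((K : ℝ) * (1 - β) + β * ∑ i, α i) * v j
          - β * (v j * digamma (β * α j + (1 - β)))
          + β * (v j * Real.log (s j))
          + (γ * η * digamma (∑ i, α i) * v j - γ * η * (v j * digamma (α j)))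
          - γ * (v j * ν j) := fun j => by rw [hE]; ring
    rw [Finset.sum_congr rfl fun j _ => e j]
    simp only [Finset.sum_sub_distrib, Finset.sum_add_distrib, mul_assoc, ← Finset.mul_sum]
    ring
  constructor
  · -- maximizer ⇒ stationarity
    intro hmax j
    have hw : ∀ w : Fin K → ℝ, w = Pi.single j 1 → True := fun _ _ => trivial
    obtain ⟨w, hw⟩ : ∃ w : Fin K → ℝ, w = Pi.single j 1 := ⟨Pi.single j 1, rfl⟩
    have hd := hasDerivAt_L_line K hK β γ η hβ hβ1 ν s L hL α w hα
    have hloc : IsLocalMax (fun t : ℝ => L (α + t • w)) 0 := by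
      have hmem : Ioi (-(α j)) ∈ nhds (0:ℝ) := Ioi_mem_nhds (by linarith [hα j])
      refine Filter.eventually_of_mem hmem fun t ht => ?_
      have hpos : ∀ i, 0 < (α + t • w) i := by
        intro i
        simp only [Pi.add_apply, Pi.smul_apply, smul_eq_mul, hw, Pi.single_apply]
        by_cases h : i = j
        · simp only [h, eq_self_iff_true, if_true, mul_one]
          have : -(α j) < t := ht
          linarith [hα j]
        · simp only [h, if_false, mul_zero, add_zero]
          exact hα i
      have h1 := hmax _ hpos
      have h2 : L (α + (0:ℝ) • w) = L α := by
        rw [zero_smul, add_zero]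
      show L (α + t • w) ≤ L (α + (0:ℝ) • w)
      rw [h2]; exact h1
    have h0 := hloc.deriv_eq_zero
    rw [hd.deriv, key w] at h0
    have hsum : ∑ k, w k * E k = E j := by
      rw [Finset.sum_eq_single j]
      · simp [hw]
      · intro k _ hk
        simp [hw, Pi.single_apply, hk]
      · intro h; exact absurd (Finset.mem_univ j) h
    rw [hsum] at h0
    have := h0
    rw [hE] at this
    simpa using this
  · -- stationarity ⇒ maximizer
    intro hstat α' hα'
    have hE0 : ∀ j, E j = 0 := by
      intro j
      rw [hE]
      simpa using hstat j
    set v : Fin K → ℝ := fun i => α' i - α i with hv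
    have hd := hasDerivAt_L_line K hK β γ η hβ hβ1 ν s L hL α v hα
    have hD : (β * (∑ i, v i) * digamma ((K : ℝ) * (1 - β) + β * ∑ i, α i)
        - ∑ i, β * v i * digamma (β * α i + (1 - β))
        + β * ∑ i, v i * Real.log (s i)
        + γ * η * ((∑ i, v i) * digamma (∑ i, α i) - ∑ i, v i * digamma (α i))
        - γ * ∑ i, v i * ν i) = 0 := by
      rw [key v]
      exact Finset.sum_eq_zero fun j _ => by rw [hE0 j, mul_zero]
    rw [hD] at hd
    have hconc := concaveOn_L K hK β γ η hβ hβ1 hγ hη ν s L hL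
    have hαmem : α ∈ orth K := hα
    have hα'mem : α' ∈ orth K := hα'
    have hline : ∀ t : ℝ, α + t • v = (1 - t) • α + t • α' := by
      intro t; funext i
      simp only [Pi.add_apply, Pi.smul_apply, smul_eq_mul, hv]
      ring
    have hslope : ∀ t ∈ Ioc (0:ℝ) 1,
        L α' - L α ≤ slope (fun t : ℝ => L (α + t • v)) 0 t := by
      intro t ht
      have hcomb := hconc.2 hαmem hα'mem (by linarith [ht.2] : (0:ℝ) ≤ 1 - t)
        ht.1.le (by ring)
      rw [← hline t] at hcomb
      simp only [smul_eq_mul] at hcomb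
      rw [slope_def_field]
      have h0v : L (α + (0:ℝ) • v) = L α := by rw [zero_smul, add_zero]
      rw [h0v, sub_zero, le_div_iff₀ ht.1]
      nlinarith [hcomb]
    have htend : Filter.Tendsto (slope (fun t : ℝ => L (α + t • v)) 0)
        (nhdsWithin 0 (Ioi 0)) (nhds 0) :=
      (hasDerivAt_iff_tendsto_slope.mp hd).mono_left
        (nhdsWithin_mono 0 (by intro x hx; simpa using (ne_of_gt hx)))
    have hev : ∀ᶠ t in nhdsWithin (0:ℝ) (Ioi 0),
        L α' - L α ≤ slope (fun t : ℝ => L (α + t • v)) 0 t := by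
      filter_upwards [Ioc_mem_nhdsGT_of_mem
        (⟨le_refl (0:ℝ), by norm_num⟩ : (0:ℝ) ∈ Ico (0:ℝ) 1)] with t ht
      exact hslope t ht
    have hfin : L α' - L α ≤ 0 := ge_of_tendsto htend hev
    linarith
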